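/- arXiv:2310.00855 — 2 statements merged into one kernel-verified Lean document; each statement's English description precedes it below -/
import Mathlib

section
/- For every k ≥ 0 one has the expansion (x_1 + … + x_n)^k · a_ρ = Σ_{|λ| = k} f_λ · a_{λ+ρ} + Σ_{|λ| < k} c_λ · a_{λ+ρ}, where both sums run over partitions λ with at most n parts, the coefficients c_λ are some elements of R, and for |λ| = k the coefficient f_λ ∈ ℕ is the number of chains of partitions ∅ = λ^(0) ⊂ λ^(1) ⊂ … ⊂ λ^(k) = λ in which each λ^(j+1) is obtained from λ^(j) by adding exactly one box (equivalently, the number of standard Young tableaux of shape λ). -/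
/- R = ℤ[t₁, t₂, …] with tₖ encoded as `MvPolynomial.X (k-1)`, i.e. 0-indexed;
   P = R[x₁, …, xₙ] = MvPolynomial (Fin n) R. -/

open MvPolynomial

noncomputable section

abbrev R : Type := MvPolynomial ℕ ℤ

abbrev P (n : ℕ) : Type := MvPolynomial (Fin n) R

/-- The double monomial `(x_i | t)^k = (x_i + t₁) ⋯ (x_i + tₖ)`. -/
def dm (n : ℕ) (i : Fin n) (k : ℕ) : P n :=
  ∏ j ∈ Finset.range k, (X i + C (MvPolynomial.X j : R))

/-- `a_ν = Σ_{σ ∈ S_n} sgn(σ) Π_i (x_{σ(i)} | t)^{ν_i}`. -/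
def aPoly (n : ℕ) (ν : Fin n → ℕ) : P n :=
  ∑ σ : Equiv.Perm (Fin n), (Equiv.Perm.sign σ : ℤ) • ∏ i : Fin n, dm n (σ i) (ν i)

/-- `ρ = (n-1, n-2, …, 1, 0)`. -/
def rho (n : ℕ) : Fin n → ℕ := fun i => n - 1 - (i : ℕ)

/-- `f_λ`: the number of chains of partitions `∅ = λ⁽⁰⁾ ⊂ λ⁽¹⁾ ⊂ … ⊂ λ⁽ᵏ⁾ = λ`
in which each `λ⁽ʲ⁺¹⁾` is obtained from `λ⁽ʲ⁾` by adding exactly one box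
(equivalently, the number of standard Young tableaux of shape `λ`). -/
def numChains (n k : ℕ) (lam : Fin n → ℕ) : ℕ :=
  Set.ncard {c : Fin (k + 1) → (Fin n → ℕ) |
    c 0 = 0 ∧ c (Fin.last k) = lam ∧ (∀ j, Antitone (c j)) ∧
    ∀ j : Fin k, ∃ i : Fin n,
      c j.succ = Function.update (c j.castSucc) i (c j.castSucc i + 1)}

lemma X_mul_dm (n : ℕ) (i : Fin n) (k : ℕ) :
    X i * dm n i k = dm n i (k + 1) - C (MvPolynomial.X k : R) * dm n i k := by
  simp only [dm, Finset.prod_range_succ]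
  ring

/-- Lemma B: a_ν = 0 when ν has two equal entries. -/
lemma aPoly_eq_zero_of_repeat (n : ℕ) (ν : Fin n → ℕ) (i j : Fin n) (hij : i ≠ j)
    (h : ν i = ν j) : aPoly n ν = 0 := by
  set F : Equiv.Perm (Fin n) → P n :=
    fun σ => (Equiv.Perm.sign σ : ℤ) • ∏ l : Fin n, dm n (σ l) (ν l) with hF
  have hν : ∀ l, ν (Equiv.swap i j l) = ν l := by
    intro l
    rcases eq_or_ne l i with rfl | hli
    · rw [Equiv.swap_apply_left]; exact h.symm
    rcases eq_or_ne l j with rfl | hlj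
    · rw [Equiv.swap_apply_right]; exact h
    · rw [Equiv.swap_apply_of_ne_of_ne hli hlj]
  have h1 : ∀ σ, F (σ * Equiv.swap i j) = - F σ := by
    intro σ
    have hprod : ∏ l : Fin n, dm n ((σ * Equiv.swap i j) l) (ν l)
        = ∏ l : Fin n, dm n (σ l) (ν l) := by
      refine Fintype.prod_equiv (Equiv.swap i j) _ _ (fun l => ?_)
      simp only [Equiv.Perm.mul_apply]
      rw [hν]
    simp only [hF, hprod, Equiv.Perm.sign_mul, Equiv.Perm.sign_swap hij]
    push_cast
    rw [mul_neg_one, neg_smul]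
  have key : aPoly n ν = - aPoly n ν :=
    calc aPoly n ν = ∑ σ : Equiv.Perm (Fin n), F σ := rfl
    _ = ∑ σ : Equiv.Perm (Fin n), F (σ * Equiv.swap i j) :=
      (Fintype.sum_equiv (Equiv.mulRight (Equiv.swap i j))
        (fun σ => F (σ * Equiv.swap i j)) F (fun σ => rfl)).symm
    _ = ∑ σ : Equiv.Perm (Fin n), - F σ := by simp only [h1]
    _ = - aPoly n ν := by rw [Finset.sum_neg_distrib]; rfl
  have h2 : (2 : ℤ) • aPoly n ν = 0 := by
    rw [two_smul]; nth_rewrite 2 [key]; ring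
  simpa using h2


lemma pieri (n : ℕ) (ν : Fin n → ℕ) :
    (∑ i : Fin n, (X i : P n)) * aPoly n ν
    = (∑ i0 : Fin n, aPoly n (Function.update ν i0 (ν i0 + 1)))
      - (∑ i0 : Fin n, C (MvPolynomial.X (ν i0) : R)) * aPoly n ν := by
  classical
  have step : ∀ (σ : Equiv.Perm (Fin n)) (i0 : Fin n),
      X (σ i0) * ∏ i : Fin n, dm n (σ i) (ν i)
      = (∏ i : Fin n, dm n (σ i) (Function.update ν i0 (ν i0 + 1) i))
        - C (MvPolynomial.X (ν i0) : R) * ∏ i : Fin n, dm n (σ i) (ν i) := by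
    intro σ i0
    have e1 : ∏ i : Fin n, dm n (σ i) (ν i)
        = dm n (σ i0) (ν i0) * ∏ i ∈ Finset.univ.erase i0, dm n (σ i) (ν i) :=
      (Finset.mul_prod_erase Finset.univ _ (Finset.mem_univ i0)).symm
    have e2 : ∏ i : Fin n, dm n (σ i) (Function.update ν i0 (ν i0 + 1) i)
        = dm n (σ i0) (ν i0 + 1) * ∏ i ∈ Finset.univ.erase i0, dm n (σ i) (ν i) := by
      rw [← Finset.mul_prod_erase Finset.univ _ (Finset.mem_univ i0),
        Function.update_self]
      congr 1
      refine Finset.prod_congr rfl (fun i hi => ?_)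
      rw [Function.update_of_ne (Finset.ne_of_mem_erase hi)]
    rw [e1, e2, ← mul_assoc, X_mul_dm]
    ring
  calc (∑ i : Fin n, (X i : P n)) * aPoly n ν
      = ∑ σ : Equiv.Perm (Fin n), (Equiv.Perm.sign σ : ℤ) •
          ∑ i0 : Fin n, (X (σ i0) * ∏ i : Fin n, dm n (σ i) (ν i)) := by
        rw [aPoly, Finset.mul_sum]
        refine Finset.sum_congr rfl (fun σ _ => ?_)
        rw [mul_smul_comm]
        congr 1
        rw [← Finset.sum_mul]
        congr 1
        exact (Fintype.sum_equiv σ (fun i0 => (X (σ i0) : P n)) (fun j => (X j : P n)) (fun i0 => rfl)).symm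
    _ = ∑ σ : Equiv.Perm (Fin n), ((Equiv.Perm.sign σ : ℤ) •
          ∑ i0 : Fin n, (∏ i : Fin n, dm n (σ i) (Function.update ν i0 (ν i0 + 1) i))
          - (Equiv.Perm.sign σ : ℤ) • ((∑ i0 : Fin n, C (MvPolynomial.X (ν i0) : R)) *
              ∏ i : Fin n, dm n (σ i) (ν i))) := by
        refine Finset.sum_congr rfl (fun σ _ => ?_)
        simp only [step, Finset.sum_sub_distrib, smul_sub]
        congr 1
        rw [Finset.sum_mul]
    _ = (∑ i0 : Fin n, aPoly n (Function.update ν i0 (ν i0 + 1)))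
      - (∑ i0 : Fin n, C (MvPolynomial.X (ν i0) : R)) * aPoly n ν := by
        rw [Finset.sum_sub_distrib]
        congr 1
        · simp only [Finset.smul_sum]
          rw [Finset.sum_comm]
          simp only [aPoly]
        · rw [aPoly, Finset.mul_sum, Finset.sum_congr rfl
            (fun σ _ => (mul_smul_comm _ _ _ : _ = _))]

def chainSet (n k : ℕ) (lam : Fin n → ℕ) : Set (Fin (k + 1) → (Fin n → ℕ)) :=
  {c : Fin (k + 1) → (Fin n → ℕ) |
    c 0 = 0 ∧ c (Fin.last k) = lam ∧ (∀ j, Antitone (c j)) ∧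
    ∀ j : Fin k, ∃ i : Fin n,
      c j.succ = Function.update (c j.castSucc) i (c j.castSucc i + 1)}

lemma numChains_eq (n k : ℕ) (lam : Fin n → ℕ) :
    numChains n k lam = (chainSet n k lam).ncard := rfl

lemma chainSet_bound (n k : ℕ) (lam : Fin n → ℕ) (c : Fin (k+1) → (Fin n → ℕ))
    (hc : c ∈ chainSet n k lam) (j : Fin (k+1)) : ∀ i : Fin n, c j i ≤ (j : ℕ) := by
  obtain ⟨h0, hlast, hanti, hstep⟩ := hc
  induction j using Fin.induction with
  | zero => simp [h0]
  | succ j ih =>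
    intro i
    obtain ⟨i0, h⟩ := hstep j
    rw [h]
    rcases eq_or_ne i i0 with rfl | hne
    · rw [Function.update_self, Fin.val_succ]
      have := ih i
      rw [Fin.coe_castSucc] at this
      omega
    · rw [Function.update_of_ne hne, Fin.val_succ]
      have := ih i
      rw [Fin.coe_castSucc] at this
      omega

lemma chainSet_finite (n k : ℕ) (lam : Fin n → ℕ) : (chainSet n k lam).Finite := by
  have hsub : chainSet n k lam ⊆
      Set.univ.pi (fun _ : Fin (k+1) => Set.univ.pi (fun _ : Fin n => Set.Iic k)) := by
    intro c hc
    intro j _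
    intro i _
    have := chainSet_bound n k lam c hc j i
    exact le_trans this (Nat.le_of_lt_succ j.isLt)
  exact Set.Finite.subset
    (Set.Finite.pi (fun _ => Set.Finite.pi (fun _ => Set.finite_Iic k))) hsub

lemma numChains_zero (n : ℕ) : numChains n 0 (fun _ => 0) = 1 := by
  rw [numChains_eq]
  have : chainSet n 0 (fun _ => 0) = {fun _ => (fun _ => 0)} := by
    ext c
    constructor
    · rintro ⟨h0, -, -, -⟩
      funext j
      have hj : j = 0 := Fin.fin_one_eq_zero j
      rw [hj, h0]
      rfl
    · rintro rfl
      refine ⟨rfl, rfl, fun j => antitone_const, fun j => j.elim0⟩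
  rw [this, Set.ncard_singleton]


section rec
variable (n k : ℕ) (μ : Fin n → ℕ)

/-- remove a box at position i -/
def dn (μ : Fin n → ℕ) (i : Fin n) : Fin n → ℕ := Function.update μ i (μ i - 1)

lemma restrict_image (hμ : Antitone μ) :
    (fun c : Fin (k+2) → (Fin n → ℕ) => c ∘ Fin.castSucc) '' chainSet n (k+1) μ
    = ⋃ i ∈ {i : Fin n | 0 < μ i ∧ Antitone (dn n μ i)}, chainSet n k (dn n μ i) := by
  ext d
  simp only [Set.mem_image, Set.mem_iUnion, Set.mem_setOf_eq, exists_prop]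
  constructor
  · rintro ⟨c, ⟨h0, hlast, hanti, hstep⟩, rfl⟩
    obtain ⟨i0, hst⟩ := hstep (Fin.last k)
    rw [Fin.succ_last, hlast] at hst
    have hpen : c (Fin.last k).castSucc = dn n μ i0 := by
      funext l
      rcases eq_or_ne l i0 with rfl | hne
      · have := congrFun hst l
        rw [Function.update_self] at this
        rw [dn, Function.update_self, this]
        omega
      · have := congrFun hst l
        rw [Function.update_of_ne hne] at this
        rw [dn, Function.update_of_ne hne, this]
    have hpos : 0 < μ i0 := by
      have := congrFun hst i0
      rw [Function.update_self] at this
      omega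
    refine ⟨i0, ⟨hpos, hpen ▸ hanti _⟩, ?_, ?_⟩
    · show c (Fin.castSucc 0) = 0
      rw [Fin.castSucc_zero, h0]
    refine ⟨?_, fun j => hanti _, fun j => ?_⟩
    · show c (Fin.castSucc (Fin.last k)) = _
      exact hpen
    · obtain ⟨i1, hs⟩ := hstep j.castSucc
      refine ⟨i1, ?_⟩
      show c (Fin.castSucc j.succ) = _
      rw [← Fin.succ_castSucc, hs]
      rfl
  · rintro ⟨i, ⟨hpos, hdanti⟩, ⟨h0, hlast, hanti, hstep⟩⟩
    refine ⟨Fin.snoc d μ, ⟨?_, ?_, ?_, ?_⟩, ?_⟩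
    · simpa using (Fin.snoc_castSucc (α := fun _ : Fin (k+2) => Fin n → ℕ) μ d 0).trans h0
    · rw [Fin.snoc_last]
    · intro j
      induction j using Fin.lastCases with
      | last => rw [Fin.snoc_last]; exact hμ
      | cast j => rw [Fin.snoc_castSucc]; exact hanti j
    · intro j
      induction j using Fin.lastCases with
      | last =>
        refine ⟨i, ?_⟩
        rw [Fin.succ_last, Fin.snoc_last, Fin.snoc_castSucc, hlast]
        funext l
        rcases eq_or_ne l i with rfl | hne
        · rw [Function.update_self, dn, Function.update_self]
          omega
        · rw [Function.update_of_ne hne, dn, Function.update_of_ne hne]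
      | cast j =>
        obtain ⟨i1, hs⟩ := hstep j
        refine ⟨i1, ?_⟩
        rw [Fin.succ_castSucc, Fin.snoc_castSucc, Fin.snoc_castSucc, hs]
    · funext j
      exact Fin.snoc_castSucc _ _ j
end rec

lemma restrict_injOn (n k : ℕ) (μ : Fin n → ℕ) :
    Set.InjOn (fun c : Fin (k+2) → (Fin n → ℕ) => c ∘ Fin.castSucc)
      (chainSet n (k+1) μ) := by
  intro c hc c' hc' h
  funext j
  induction j using Fin.lastCases with
  | last => rw [hc.2.1, hc'.2.1]
  | cast j => exact congrFun h j

lemma numChains_succ (n k : ℕ) (μ : Fin n → ℕ) (hμ : Antitone μ) :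
    numChains n (k+1) μ =
    ∑ i ∈ Finset.univ.filter
        (fun i : Fin n => 0 < μ i ∧ Antitone (dn n μ i)),
      numChains n k (dn n μ i) := by
  classical
  have h1 : numChains n (k+1) μ
      = ((fun c : Fin (k+2) → (Fin n → ℕ) => c ∘ Fin.castSucc) ''
          chainSet n (k+1) μ).ncard := by
    rw [numChains_eq, Set.ncard_image_of_injOn (restrict_injOn n k μ)]
  rw [h1, restrict_image n k μ hμ]
  set T : Finset (Fin n) := Finset.univ.filter
      (fun i : Fin n => 0 < μ i ∧ Antitone (dn n μ i)) with hT
  have hUnion : (⋃ i ∈ {i : Fin n | 0 < μ i ∧ Antitone (dn n μ i)}, chainSet n k (dn n μ i))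
      = ↑(T.biUnion (fun i => (chainSet_finite n k (dn n μ i)).toFinset)) := by
    ext c
    simp only [Set.mem_iUnion, Set.mem_setOf_eq, exists_prop, Finset.coe_biUnion,
      Finset.mem_coe, Finset.mem_biUnion, Set.Finite.mem_toFinset, hT,
      Finset.mem_filter, Finset.mem_univ, true_and]
  rw [hUnion, Set.ncard_coe_finset]
  rw [Finset.card_biUnion]
  · refine Finset.sum_congr rfl (fun i _ => ?_)
    rw [numChains_eq, Set.ncard_eq_toFinset_card (chainSet n k (dn n μ i))
      (chainSet_finite n k (dn n μ i))]
  · intro i hi i' hi' hne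
    rw [Function.onFun, Finset.disjoint_left]
    intro c hcmem hcmem'
    rw [Set.Finite.mem_toFinset] at hcmem hcmem'
    have e1 : c (Fin.last k) = dn n μ i := hcmem.2.1
    have e2 : c (Fin.last k) = dn n μ i' := hcmem'.2.1
    have : dn n μ i = dn n μ i' := e1 ▸ e2
    have hd := congrFun this i
    rw [Finset.mem_coe, hT, Finset.mem_filter] at hi
    rw [dn, dn, Function.update_self, Function.update_of_ne hne] at hd
    have := hi.2.1
    omega


noncomputable section main

def addRho (n : ℕ) (ν : Fin n → ℕ) : Fin n → ℕ := fun i => ν i + rho n i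

def up (n : ℕ) (ν : Fin n → ℕ) (i : Fin n) : Fin n → ℕ :=
  Function.update ν i (ν i + 1)

lemma addRho_up (n : ℕ) (ν : Fin n → ℕ) (i : Fin n) :
    addRho n (up n ν i) = Function.update (addRho n ν) i (addRho n ν i + 1) := by
  funext l
  rcases eq_or_ne l i with rfl | hne
  · simp [addRho, up, Function.update_self]
    omega
  · simp [addRho, up, Function.update_of_ne hne]

lemma dn_up (n : ℕ) (ν : Fin n → ℕ) (i : Fin n) : dn n (up n ν i) i = ν := by
  funext l
  rcases eq_or_ne l i with rfl | hne
  · simp [dn, up]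
  · simp [dn, up, Function.update_of_ne hne]

lemma up_dn (n : ℕ) (μ : Fin n → ℕ) (i : Fin n) (h : 0 < μ i) :
    up n (dn n μ i) i = μ := by
  funext l
  rcases eq_or_ne l i with rfl | hne
  · simp [dn, up]
    omega
  · simp [dn, up, Function.update_of_ne hne]

lemma sum_up (n : ℕ) (ν : Fin n → ℕ) (i : Fin n) :
    ∑ l, up n ν i l = (∑ l, ν l) + 1 := by
  simp only [up]
  rw [Finset.sum_update_of_mem (Finset.mem_univ i)]
  rw [← Finset.sum_erase_add Finset.univ ν (Finset.mem_univ i), Finset.erase_eq]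
  ring

lemma sum_dn (n : ℕ) (μ : Fin n → ℕ) (i : Fin n) (h : 0 < μ i) :
    ∑ l, dn n μ i l = (∑ l, μ l) - 1 := by
  have : ∑ l, μ l = (∑ l, dn n μ i l) + 1 := by
    conv_lhs => rw [← up_dn n μ i h]
    rw [sum_up]
  omega

lemma sum_pos_of_up (n : ℕ) (ν : Fin n → ℕ) (i : Fin n) : 0 < ∑ l, up n ν i l := by
  rw [sum_up]; omega

/-- Key dichotomy: for antitone ν, bumping coordinate i either keeps antitone
or kills the alternant. -/
lemma up_dichotomy (n : ℕ) (ν : Fin n → ℕ) (hν : Antitone ν) (i : Fin n) :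
    Antitone (up n ν i) ∨ aPoly n (addRho n (up n ν i)) = 0 := by
  by_cases h : Antitone (up n ν i)
  · exact Or.inl h
  right
  -- extract a < b with up ν i a < up ν i b; conclude b = i, ν (i-1) = ν i, i ≥ 1
  rw [Antitone] at h
  push_neg at h
  obtain ⟨a, b, hab, hlt⟩ := h
  have hab' : a < b := by
    rcases lt_or_eq_of_le hab with h' | rfl
    · exact h'
    · exact absurd hlt (lt_irrefl _)
  have hbi : b = i := by
    by_contra hbi
    have h1 : up n ν i b = ν b := Function.update_of_ne hbi _ _
    have h2 : ν a ≤ up n ν i a := by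
      rcases eq_or_ne a i with rfl | hai
      · rw [up, Function.update_self]; omega
      · rw [up, Function.update_of_ne hai]
    have := hν (le_of_lt hab')
    omega
  subst hbi
  have hai : a ≠ b := Fin.ne_of_lt hab'
  have h1 : up n ν b b = ν b + 1 := Function.update_self _ _ _
  have h2 : up n ν b a = ν a := Function.update_of_ne hai _ _
  have hνab : ν a = ν b := by
    have := hν (le_of_lt hab')
    omega
  -- b ≥ 1; let j := b - 1
  have hb1 : 1 ≤ (b : ℕ) := by
    have : (a : ℕ) < (b : ℕ) := hab'
    omega
  set j : Fin n := ⟨(b : ℕ) - 1, by omega⟩ with hj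
  have hja : a ≤ j := by
    rw [Fin.le_def]
    simp only [hj]
    omega
  have hνjb : ν j = ν b := by
    have h3 : ν j ≤ ν a := hν hja
    have h4 : ν b ≤ ν j := hν (by rw [Fin.le_def]; simp only [hj]; omega)
    omega
  refine aPoly_eq_zero_of_repeat n _ j b (by simp [hj, Fin.ext_iff]; omega) ?_
  have hjb : j ≠ b := by simp [hj, Fin.ext_iff]; omega
  have e1 : addRho n (up n ν b) j = ν j + (n - 1 - (j : ℕ)) := by
    simp [addRho, up, rho, Function.update_of_ne hjb]
  have e2 : addRho n (up n ν b) b = ν b + 1 + (n - 1 - (b : ℕ)) := by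
    simp [addRho, up, rho]
  rw [e1, e2, hνjb]
  have : (b : ℕ) < n := b.isLt
  simp [hj]
  omega

end main

noncomputable section big
open Finset

def Pset (n k : ℕ) : Finset (Fin n → ℕ) :=
  @Finset.filter _ (fun f => Antitone f ∧ ∑ i, f i = k) (Classical.decPred _)
    (Fintype.piFinset (fun _ : Fin n => Finset.range (k+1)))

lemma mem_Pset (n k : ℕ) (f : Fin n → ℕ) :
    f ∈ Pset n k ↔ Antitone f ∧ ∑ i, f i = k := by
  rw [Pset, @Finset.mem_filter _ _ (Classical.decPred _)]
  constructor
  · exact fun h => h.2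
  · intro h
    refine ⟨?_, h⟩
    rw [Fintype.mem_piFinset]
    intro i
    rw [Finset.mem_range]
    have : f i ≤ ∑ l, f l := Finset.single_le_sum (fun _ _ => Nat.zero_le _)
      (Finset.mem_univ i)
    omega

def Qset (n k : ℕ) : Finset (Fin n → ℕ) :=
  @Finset.filter _ (fun f => Antitone f ∧ ∑ i, f i < k) (Classical.decPred _)
    (Fintype.piFinset (fun _ : Fin n => Finset.range (k+1)))

lemma mem_Qset (n k : ℕ) (f : Fin n → ℕ) :
    f ∈ Qset n k ↔ Antitone f ∧ ∑ i, f i < k := by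
  rw [Qset, @Finset.mem_filter _ _ (Classical.decPred _)]
  constructor
  · exact fun h => h.2
  · intro h
    refine ⟨?_, h⟩
    rw [Fintype.mem_piFinset]
    intro i
    rw [Finset.mem_range]
    have : f i ≤ ∑ l, f l := Finset.single_le_sum (fun _ _ => Nat.zero_le _)
      (Finset.mem_univ i)
    omega

set_option maxHeartbeats 1000000 in
def V (n k : ℕ) : Submodule R (P n) :=
  Submodule.span R ((fun μ => aPoly n (addRho n μ)) ''
    {μ : Fin n → ℕ | Antitone μ ∧ ∑ i, μ i < k})

lemma aPoly_addRho_mem_V (n k : ℕ) (μ : Fin n → ℕ) (hμ : Antitone μ)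
    (hsum : ∑ i, μ i < k) : aPoly n (addRho n μ) ∈ V n k :=
  Submodule.subset_span ⟨μ, ⟨hμ, hsum⟩, rfl⟩

lemma C_mul_mem_V (n k : ℕ) (r : R) (x : P n) (hx : x ∈ V n k) :
    C r * x ∈ V n k := by
  have : C r * x = r • x := (MvPolynomial.smul_eq_C_mul x r).symm
  rw [this]
  exact Submodule.smul_mem _ r hx

set_option maxHeartbeats 1000000 in
lemma pieri' (n : ℕ) (ν : Fin n → ℕ) :
    (∑ i : Fin n, (X i : P n)) * aPoly n (addRho n ν)
    = (∑ i0 : Fin n, aPoly n (addRho n (up n ν i0)))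
      - C (∑ i0 : Fin n, (MvPolynomial.X (addRho n ν i0) : R)) * aPoly n (addRho n ν) := by
  rw [pieri, map_sum]
  congr 1
  refine Finset.sum_congr rfl (fun i _ => ?_)
  rw [addRho_up]


/-- multiplication by (∑ Xᵢ) sends V k into V (k+1) -/
lemma mul_sumX_mem_V (n k : ℕ) (w : P n) (hw : w ∈ V n k) :
    (∑ i : Fin n, (X i : P n)) * w ∈ V n (k+1) := by
  refine Submodule.span_induction ?_ ?_ ?_ ?_ hw
  · rintro x ⟨μ, ⟨hμ, hsum⟩, rfl⟩
    rw [pieri']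
    refine Submodule.sub_mem _ ?_ ?_
    · refine Submodule.sum_mem _ (fun i _ => ?_)
      rcases up_dichotomy n μ hμ i with h | h
      · exact aPoly_addRho_mem_V n (k+1) _ h (by rw [sum_up]; omega)
      · rw [h]; exact Submodule.zero_mem _
    · exact C_mul_mem_V n (k+1) _ _ (aPoly_addRho_mem_V n (k+1) μ hμ (by omega))
  · rw [mul_zero]; exact Submodule.zero_mem _
  · intro x y _ _ hx hy
    rw [mul_add]; exact Submodule.add_mem _ hx hy
  · intro r x _ hx
    rw [mul_smul_comm]; exact Submodule.smul_mem _ r hx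

end big

noncomputable section induct
open Finset

set_option maxHeartbeats 1000000

lemma ML (n : ℕ) : ∀ k : ℕ,
    ((∑ i : Fin n, (X i : P n)) ^ k * aPoly n (rho n))
      - ∑ lam ∈ Pset n k, (numChains n k lam : R) • aPoly n (addRho n lam)
    ∈ V n k := by
  intro k
  induction k with
  | zero =>
    have hP0 : Pset n 0 = {fun _ => 0} := by
      ext f
      rw [mem_Pset, Finset.mem_singleton]
      constructor
      · rintro ⟨-, hsum⟩
        funext i
        have := Finset.sum_eq_zero_iff.mp hsum i (Finset.mem_univ i)
        simpa using this
      · rintro rfl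
        exact ⟨antitone_const, by simp⟩
    have haddRho : addRho n (fun _ => 0) = rho n := by
      funext i; simp [addRho]
    rw [hP0, Finset.sum_singleton, haddRho, numChains_zero, pow_zero, one_mul]
    simp only [Nat.cast_one, one_smul, sub_self]
    exact Submodule.zero_mem _
  | succ k ih =>
    set A : P n := ∑ i : Fin n, (X i : P n) with hA
    set Sk : P n := ∑ lam ∈ Pset n k,
      (numChains n k lam : R) • aPoly n (addRho n lam) with hSk
    set Sk1 : P n := ∑ lam ∈ Pset n (k+1),
      (numChains n (k+1) lam : R) • aPoly n (addRho n lam) with hSk1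
    have h2 : A * Sk - Sk1 ∈ V n (k+1) := by
      -- expand A * Sk via pieri
      have expand : A * Sk =
          (∑ lam ∈ Pset n k, (numChains n k lam : R) •
            ∑ i : Fin n, aPoly n (addRho n (up n lam i)))
          - ∑ lam ∈ Pset n k, (numChains n k lam : R) •
              (C (∑ i0 : Fin n, (MvPolynomial.X (addRho n lam i0) : R)) *
                aPoly n (addRho n lam)) := by
        rw [hSk, Finset.mul_sum, ← Finset.sum_sub_distrib]
        refine Finset.sum_congr rfl (fun lam _ => ?_)
        rw [mul_smul_comm, pieri', smul_sub]
      have hW : ∑ lam ∈ Pset n k, (numChains n k lam : R) •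
          (C (∑ i0 : Fin n, (MvPolynomial.X (addRho n lam i0) : R)) *
            aPoly n (addRho n lam)) ∈ V n (k+1) := by
        refine Submodule.sum_mem _ (fun lam hlam => ?_)
        refine Submodule.smul_mem _ _ ?_
        obtain ⟨hanti, hsum⟩ := (mem_Pset n k lam).mp hlam
        exact C_mul_mem_V n (k+1) _ _
          (aPoly_addRho_mem_V n (k+1) lam hanti (by omega))
      have hU : (∑ lam ∈ Pset n k, (numChains n k lam : R) •
            ∑ i : Fin n, aPoly n (addRho n (up n lam i))) = Sk1 := by
        have step1 : ∀ lam ∈ Pset n k,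
            (numChains n k lam : R) • ∑ i : Fin n, aPoly n (addRho n (up n lam i))
            = ∑ i ∈ Finset.univ.filter
                (fun i : Fin n => Antitone (up n lam i)),
                (numChains n k lam : R) • aPoly n (addRho n (up n lam i)) := by
          intro lam hlam
          obtain ⟨hanti, -⟩ := (mem_Pset n k lam).mp hlam
          rw [Finset.smul_sum]
          refine (Finset.sum_subset (Finset.filter_subset _ _) ?_).symm
          intro i _ hni
          have : ¬ Antitone (up n lam i) := by
            intro hcon
            exact hni (Finset.mem_filter.mpr ⟨Finset.mem_univ i, hcon⟩)
          rcases up_dichotomy n lam hanti i with h | h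
          · exact absurd h this
          · rw [h, smul_zero]
        rw [Finset.sum_congr rfl step1]
        -- sigma reindex
        rw [Finset.sum_sigma' (Pset n k)
          (fun lam => Finset.univ.filter (fun i : Fin n => Antitone (up n lam i)))
          (fun lam i => (numChains n k lam : R) • aPoly n (addRho n (up n lam i)))]
        rw [Finset.sum_nbij'
          (i := fun p => (⟨up n p.1 p.2, p.2⟩ :
            (_ : Fin n → ℕ) × Fin n))
          (j := fun p => (⟨dn n p.1 p.2, p.2⟩ :
            (_ : Fin n → ℕ) × Fin n))
          (t := (Pset n (k+1)).sigma
            (fun mu => Finset.univ.filter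
              (fun i : Fin n => 0 < mu i ∧ Antitone (dn n mu i))))
          (g := fun p => (numChains n k (dn n p.1 p.2) : R) •
            aPoly n (addRho n p.1))
          ?_ ?_ ?_ ?_ ?_]
        · -- now sum over (mu, i) of N_k (dn mu i) • a_mu equals Sk1
          rw [← Finset.sum_sigma' (Pset n (k+1))
            (fun mu => Finset.univ.filter
              (fun i : Fin n => 0 < mu i ∧ Antitone (dn n mu i)))
            (fun mu i => (numChains n k (dn n mu i) : R) •
              aPoly n (addRho n mu))]
          rw [hSk1]
          refine Finset.sum_congr rfl (fun mu hmu => ?_)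
          obtain ⟨hanti, -⟩ := (mem_Pset n (k+1) mu).mp hmu
          rw [← Finset.sum_smul, numChains_succ n k mu hanti, Nat.cast_sum]
        · rintro ⟨lam, i⟩ hp
          rw [Finset.mem_sigma] at hp ⊢
          dsimp only at hp ⊢
          obtain ⟨hlam, hi⟩ := hp
          obtain ⟨hanti, hsum⟩ := (mem_Pset n k lam).mp hlam
          have hupanti : Antitone (up n lam i) :=
            (Finset.mem_filter.mp hi).2
          constructor
          · rw [mem_Pset]
            exact ⟨hupanti, by rw [sum_up]; omega⟩
          · rw [Finset.mem_filter]
            refine ⟨Finset.mem_univ i, ?_, ?_⟩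
            · rw [up, Function.update_self]; omega
            · rw [dn_up]; exact hanti
        · rintro ⟨mu, i⟩ hp
          rw [Finset.mem_sigma] at hp ⊢
          dsimp only at hp ⊢
          obtain ⟨hmu, hi⟩ := hp
          obtain ⟨hanti, hsum⟩ := (mem_Pset n (k+1) mu).mp hmu
          obtain ⟨-, hpos, hdnanti⟩ := Finset.mem_filter.mp hi
          constructor
          · rw [mem_Pset]
            refine ⟨hdnanti, ?_⟩
            rw [sum_dn n mu i hpos]; omega
          · rw [Finset.mem_filter]
            refine ⟨Finset.mem_univ i, ?_⟩
            rw [up_dn n mu i hpos]; exact hanti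
        · rintro ⟨lam, i⟩ hp
          simp only [Sigma.mk.inj_iff, heq_eq_eq, and_true]
          exact dn_up n lam i
        · rintro ⟨mu, i⟩ hp
          rw [Finset.mem_sigma] at hp
          obtain ⟨-, hi⟩ := hp
          obtain ⟨-, hpos, -⟩ := Finset.mem_filter.mp hi
          simp only [Sigma.mk.inj_iff, heq_eq_eq, and_true]
          exact up_dn n mu i hpos
        · rintro ⟨lam, i⟩ hp
          dsimp only
          rw [dn_up]
      rw [expand, hU]
      have : Sk1 - (∑ lam ∈ Pset n k, (numChains n k lam : R) •
          (C (∑ i0 : Fin n, (MvPolynomial.X (addRho n lam i0) : R)) *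
            aPoly n (addRho n lam))) - Sk1
          = - ∑ lam ∈ Pset n k, (numChains n k lam : R) •
          (C (∑ i0 : Fin n, (MvPolynomial.X (addRho n lam i0) : R)) *
            aPoly n (addRho n lam)) := by ring
      rw [this]
      exact Submodule.neg_mem _ hW
    have decomp : A ^ (k+1) * aPoly n (rho n) - Sk1
        = A * (A ^ k * aPoly n (rho n) - Sk) + (A * Sk - Sk1) := by ring
    rw [decomp]
    exact Submodule.add_mem _ (mul_sumX_mem_V n k _ ih) h2

end induct


set_option maxHeartbeats 1000000 in
/-- for every `k ≥ 0`,
`(x₁ + … + xₙ)ᵏ · a_ρ = Σ_{|λ| = k} f_λ a_{λ+ρ} + Σ_{|λ| < k} c_λ a_{λ+ρ}`,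
where the sums run over partitions `λ` with at most `n` parts, `c_λ ∈ R`, and
for `|λ| = k` the coefficient is the number `f_λ` of chains of partitions from
`∅` to `λ` adding one box at each step. -/
theorem stmt_10 (n : ℕ) (hn : 1 ≤ n) (k : ℕ) :
    ∃ c : (Fin n → ℕ) → R,
      (∑ i : Fin n, (X i : P n)) ^ k * aPoly n (rho n) =
        (∑ᶠ lam ∈ {lam : Fin n → ℕ | Antitone lam ∧ ∑ i, lam i = k},
          (numChains n k lam : R) • aPoly n (fun i => lam i + rho n i)) +
        ∑ᶠ lam ∈ {lam : Fin n → ℕ | Antitone lam ∧ ∑ i, lam i < k},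
          c lam • aPoly n (fun i => lam i + rho n i) := by
  classical
  have hw := ML n k
  -- rewrite span as range over subtype
  have himg : (fun μ => aPoly n (addRho n μ)) ''
      {μ : Fin n → ℕ | Antitone μ ∧ ∑ i, μ i < k}
      = Set.range (fun q : ↥(Qset n k) => aPoly n (addRho n (q : Fin n → ℕ))) := by
    have hs : {μ : Fin n → ℕ | Antitone μ ∧ ∑ i, μ i < k} = ↑(Qset n k) := by
      ext f; simp [mem_Qset]
    rw [hs]
    exact Set.image_eq_range _ _
  rw [V, himg] at hw
  obtain ⟨c0, hc0⟩ := (Submodule.mem_span_range_iff_exists_fun R).mp hw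
  refine ⟨fun μ => if h : μ ∈ Qset n k then c0 ⟨μ, h⟩ else 0, ?_⟩
  have hset1 : {lam : Fin n → ℕ | Antitone lam ∧ ∑ i, lam i = k} = ↑(Pset n k) := by
    ext f; simp [mem_Pset]
  have hset2 : {lam : Fin n → ℕ | Antitone lam ∧ ∑ i, lam i < k} = ↑(Qset n k) := by
    ext f; simp [mem_Qset]
  rw [hset1, hset2, finsum_mem_coe_finset, finsum_mem_coe_finset]
  show (∑ i : Fin n, (X i : P n)) ^ k * aPoly n (rho n)
      = (∑ lam ∈ Pset n k, (numChains n k lam : R) • aPoly n (addRho n lam))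
      + ∑ lam ∈ Qset n k,
          (if h : lam ∈ Qset n k then c0 ⟨lam, h⟩ else 0) • aPoly n (addRho n lam)
  have hQ : ∑ lam ∈ Qset n k,
      (if h : lam ∈ Qset n k then c0 ⟨lam, h⟩ else 0) • aPoly n (addRho n lam)
      = ∑ q : ↥(Qset n k), c0 q • aPoly n (addRho n (q : Fin n → ℕ)) := by
    rw [Finset.univ_eq_attach, ← Finset.sum_attach (Qset n k)
      (fun lam => (if h : lam ∈ Qset n k then c0 ⟨lam, h⟩ else 0) • aPoly n (addRho n lam))]
    refine Finset.sum_congr rfl (fun q _ => ?_)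
    rw [dif_pos q.2]
  rw [hQ, hc0]
  ring

end
end

section
/- The map (R[x])^n → P sending (f_1, …, f_n) to Σ_{σ ∈ S_n} sgn(σ) f_{σ(1)}(x_1) f_{σ(2)}(x_2) ⋯ f_{σ(n)}(x_n) is an alternating R-multilinear map with values in the R-module of skew-symmetric polynomials, and the induced R-linear map from the n-th exterior power ⋀^n_R R[x] to the R-module of skew-symmetric polynomials in P is an isomorphism of R-modules. -/
/- R = ℤ[t₁, t₂, …]; P = R[x₁, …, xₙ] = MvPolynomial (Fin n) R. -/

open MvPolynomial

noncomputable section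

/-- A polynomial `f ∈ P` is skew-symmetric if `σ · f = sgn(σ) f` for every
permutation `σ` of the variables. -/
def IsSkew (n : ℕ) (f : P n) : Prop :=
  ∀ σ : Equiv.Perm (Fin n), rename σ f = (Equiv.Perm.sign σ : ℤ) • f

/-- `Λₙ^sgn`, the `R`-submodule of skew-symmetric polynomials of `P`. -/
def SkewSub (n : ℕ) : Submodule R (P n) where
  carrier := {f | IsSkew n f}
  add_mem' := by
    intro f g hf hg σ
    rw [map_add, hf σ, hg σ, smul_add]
  zero_mem' := by
    intro σ
    simp
  smul_mem' := by
    intro c f hf σ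
    rw [map_smul, hf σ, smul_comm]

set_option maxHeartbeats 1000000
set_option synthInstance.maxHeartbeats 200000

namespace Stmt11Aux

variable (n : ℕ)

/-- row map -/
def Lrow : Polynomial R →ₗ[R] (Fin n → P n) :=
  LinearMap.pi fun j => (Polynomial.aeval (X j : P n)).toLinearMap

def Fmap : (Polynomial R) [⋀^Fin n]→ₗ[R] P n where
  toMultilinearMap :=
    (((Matrix.detRowAlternating : (Fin n → P n) [⋀^Fin n]→ₗ[P n] (P n))
      |>.toMultilinearMap.restrictScalars R)).compLinearMap fun _ => Lrow n
  map_eq_zero_of_eq' := fun v i j hv hij => by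
    exact (Matrix.detRowAlternating : (Fin n → P n) [⋀^Fin n]→ₗ[P n] (P n)).map_eq_zero_of_eq
      (fun i => Lrow n (v i)) (show Lrow n (v i) = Lrow n (v j) by rw [hv]) hij

lemma Fmap_det (v : Fin n → Polynomial R) :
    Fmap n v = Matrix.det (Matrix.of fun i j => Polynomial.aeval (X j : P n) (v i)) := by
  rfl

lemma Fmap_apply (v : Fin n → Polynomial R) :
    Fmap n v = ∑ σ : Equiv.Perm (Fin n), (Equiv.Perm.sign σ : ℤ) •
      ∏ i : Fin n, Polynomial.aeval (X i : P n) (v (σ i)) := by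
  rw [Fmap_det, Matrix.det_apply]
  simp [Units.smul_def]


lemma Fmap_skew (v : Fin n → Polynomial R) : IsSkew n (Fmap n v) := by
  intro τ
  rw [Fmap_det]
  rw [show ((rename τ : P n →ₐ[R] P n) (Matrix.det (Matrix.of fun i j =>
      Polynomial.aeval (X j : P n) (v i))) =
      Matrix.det ((Matrix.of fun i j => Polynomial.aeval (X j : P n) (v i)).map
        (rename τ : P n →ₐ[R] P n))) from AlgHom.map_det _ _]
  have hM : (Matrix.of fun i j => Polynomial.aeval (X j : P n) (v i)).map
      (rename τ : P n →ₐ[R] P n) =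
      (Matrix.of fun i j => Polynomial.aeval (X j : P n) (v i)).submatrix id τ := by
    ext i j
    simp only [Matrix.map_apply, Matrix.of_apply, Matrix.submatrix_apply, id_eq]
    rw [← Polynomial.aeval_algHom_apply]
    simp
  rw [hM, Matrix.det_permute']
  simp [zsmul_eq_mul]

lemma prodXpow (e : Fin n → ℕ) :
    (∏ i, (X i : P n) ^ e i) = monomial (Finsupp.equivFunOnFinite.symm e) 1 := by
  rw [← prod_X_pow_eq_monomial]
  rw [Finset.prod_subset (Finset.subset_univ (Finsupp.equivFunOnFinite.symm e).support)]
  · rfl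
  · intro i _ hi
    have : (Finsupp.equivFunOnFinite.symm e) i = 0 := by
      simpa using Finsupp.notMem_support_iff.mp hi
    simp_all

lemma Fmap_pow (k : Fin n → ℕ) :
    Fmap n (fun i => Polynomial.X ^ k i) =
      ∑ σ : Equiv.Perm (Fin n), (Equiv.Perm.sign σ : ℤ) •
        monomial (Finsupp.equivFunOnFinite.symm (k ∘ σ)) 1 := by
  rw [Fmap_apply]
  refine Finset.sum_congr rfl fun σ _ => ?_
  rw [← prodXpow]
  congr 1
  refine Finset.prod_congr rfl fun i _ => ?_
  simp

def Amap : (Polynomial R) [⋀^Fin n]→ₗ[R] (⋀[R]^n (Polynomial R)) :=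
  (ExteriorAlgebra.ιMulti R n).codRestrict _
    fun v => ExteriorAlgebra.ιMulti_range R n ⟨v, rfl⟩

open scoped Classical in
def Hmap : P n →ₗ[R] (⋀[R]^n (Polynomial R)) :=
  (MvPolynomial.basisMonomials (Fin n) R).constr R fun d =>
    if StrictMono ⇑d then Amap n (fun i => Polynomial.X ^ d i) else 0

open scoped Classical in
lemma Hmap_monomial (d : Fin n →₀ ℕ) :
    Hmap n (monomial d 1) =
      if StrictMono ⇑d then Amap n (fun i => Polynomial.X ^ d i) else 0 := by
  have := (MvPolynomial.basisMonomials (Fin n) R).constr_basis R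
    (fun d => if StrictMono ⇑d then Amap n (fun i => Polynomial.X ^ d i) else 0) d
  simpa [Hmap] using this

lemma sort_strictMono {k : Fin n → ℕ} (hk : Function.Injective k) :
    StrictMono (k ∘ Tuple.sort k) :=
  (Tuple.monotone_sort k).strictMono_of_injective (hk.comp (Tuple.sort k).injective)

lemma sort_unique {k : Fin n → ℕ} (hk : Function.Injective k) {σ τ : Equiv.Perm (Fin n)}
    (h1 : StrictMono (k ∘ σ)) (h2 : StrictMono (k ∘ τ)) : σ = τ := by
  have hr : Set.range (k ∘ σ) = Set.range (k ∘ τ) := by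
    rw [Set.range_comp, Set.range_comp, σ.range_eq_univ, τ.range_eq_univ]
  haveI : WellFoundedLT (Fin n) := Finite.to_wellFoundedLT
  have := (StrictMono.range_inj h1 h2).mp hr
  exact Equiv.ext fun x => hk (congrFun this x)


def Gmap : (⋀[R]^n (Polynomial R)) →ₗ[R] P n :=
  (ExteriorAlgebra.liftAlternating
    (Function.update (0 : ∀ i, (Polynomial R) [⋀^Fin i]→ₗ[R] P n) n (Fmap n))).domRestrict
    (⋀[R]^n (Polynomial R))

lemma G_Amap (v : Fin n → Polynomial R) : Gmap n (Amap n v) = Fmap n v := by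
  have : ((Amap n v : ⋀[R]^n (Polynomial R)) : ExteriorAlgebra R (Polynomial R)) =
      ExteriorAlgebra.ιMulti R n v := rfl
  rw [Gmap, LinearMap.domRestrict_apply, this,
    ExteriorAlgebra.liftAlternating_apply_ιMulti, Function.update_self]

lemma key1 : (Hmap n).compAlternatingMap (Fmap n) = Amap n := by
  classical
  refine Module.Basis.ext_alternating (Polynomial.basisMonomials R) fun k hk => ?_
  have hb : ∀ m : ℕ, (Polynomial.basisMonomials R) m = (Polynomial.X : Polynomial R) ^ m := by
    intro m
    rw [Polynomial.coe_basisMonomials, Polynomial.X_pow_eq_monomial]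
  simp only [LinearMap.compAlternatingMap_apply, hb]
  rw [Fmap_pow, map_sum]
  set τ := Tuple.sort k with hτ
  have hsm : StrictMono (k ∘ τ) := sort_strictMono n hk
  rw [Finset.sum_eq_single τ]
  · rw [map_zsmul, Hmap_monomial]
    have hc : ⇑(Finsupp.equivFunOnFinite.symm (k ∘ τ)) = k ∘ τ :=
      rfl
    rw [if_pos (by rw [hc]; exact hsm)]
    have h2 : (fun i => (Polynomial.X : Polynomial R) ^
        ((Finsupp.equivFunOnFinite.symm (k ∘ τ)) i)) =
        (fun i => (Polynomial.X : Polynomial R) ^ k i) ∘ τ := by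
      funext i
      rw [hc]
      rfl
    rw [h2, AlternatingMap.map_perm]
    rw [Units.smul_def, smul_smul]
    have : ((Equiv.Perm.sign τ : ℤ) * (Equiv.Perm.sign τ : ℤ)) = 1 := by
      rcases Int.units_eq_one_or (Equiv.Perm.sign τ) with h | h <;> rw [h] <;> rfl
    rw [this, one_smul]
  · intro σ _ hστ
    rw [map_zsmul, Hmap_monomial]
    have hc : ⇑(Finsupp.equivFunOnFinite.symm (k ∘ σ)) = k ∘ σ :=
      rfl
    rw [if_neg, smul_zero]
    rw [hc]
    intro hsm'
    exact hστ (sort_unique n hk hsm' hsm)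
  · intro h
    exact absurd (Finset.mem_univ τ) h

lemma span_Amap : Submodule.span R (Set.range (Amap n)) = ⊤ := by
  apply Submodule.map_injective_of_injective
    (Submodule.injective_subtype (⋀[R]^n (Polynomial R)))
  rw [Submodule.map_span, Submodule.map_top, Submodule.range_subtype]
  have : (Submodule.subtype (⋀[R]^n (Polynomial R))) '' (Set.range (Amap n)) =
      Set.range (ExteriorAlgebra.ιMulti R n (M := Polynomial R)) := by
    rw [← Set.range_comp]
    rfl
  rw [this, ExteriorAlgebra.ιMulti_span_fixedDegree]

lemma GH_inv (x : ⋀[R]^n (Polynomial R)) : Hmap n (Gmap n x) = x := by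
  have hx : x ∈ Submodule.span R (Set.range (Amap n)) := by
    rw [span_Amap]; trivial
  refine Submodule.span_induction ?_ ?_ ?_ ?_ hx
  · rintro y ⟨v, rfl⟩
    rw [G_Amap]
    have := DFunLike.congr_fun (key1 n) v
    simpa using this
  · simp
  · intro a b _ _ ha hb
    rw [map_add, map_add, ha, hb]
  · intro c a _ ha
    rw [map_smul, map_smul, ha]

lemma G_skew (x : ⋀[R]^n (Polynomial R)) : IsSkew n (Gmap n x) := by
  have hx : x ∈ Submodule.span R (Set.range (Amap n)) := by
    rw [span_Amap]; trivial
  refine Submodule.span_induction ?_ ?_ ?_ ?_ hx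
  · rintro y ⟨v, rfl⟩
    rw [G_Amap]
    exact Fmap_skew n v
  · intro σ; simp
  · intro a b _ _ ha hb σ
    rw [map_add, map_add, ha σ, hb σ, smul_add]
  · intro c a _ ha σ
    rw [map_smul, map_smul, ha σ, smul_comm]


lemma coeff_swap {f : P n} (hf : IsSkew n f) (d : Fin n →₀ ℕ) (σ : Equiv.Perm (Fin n)) :
    coeff (Finsupp.equivFunOnFinite.symm (⇑d ∘ ⇑σ)) f = (Equiv.Perm.sign σ : ℤ) • coeff d f := by
  have h1 : Finsupp.mapDomain ⇑(σ⁻¹) d = Finsupp.equivFunOnFinite.symm (⇑d ∘ ⇑σ) := by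
    ext x
    have : (Finsupp.mapDomain ⇑(σ⁻¹) d) (σ⁻¹ (σ x)) = d (σ x) :=
      Finsupp.mapDomain_apply (σ⁻¹ : Equiv.Perm (Fin n)).injective d (σ x)
    simpa using this
  have h2 := coeff_rename_mapDomain ⇑(σ⁻¹) (σ⁻¹ : Equiv.Perm (Fin n)).injective f d
  rw [hf σ⁻¹, h1, MvPolynomial.coeff_smul, Equiv.Perm.sign_inv] at h2
  rcases Int.units_eq_one_or (Equiv.Perm.sign σ) with h | h <;>
    rw [h] at h2 ⊢ <;> simp at h2 ⊢ <;> simp [← h2]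

lemma two_ne_zero' : (2 : R) ≠ 0 := by
  have : CharZero R := inferInstance
  exact two_ne_zero

lemma coeff_noninj {f : P n} (hf : IsSkew n f) (d : Fin n →₀ ℕ)
    (hd : ¬ Function.Injective ⇑d) : coeff d f = 0 := by
  rw [Function.not_injective_iff] at hd
  obtain ⟨i, j, hij, hne⟩ := hd
  have h := coeff_swap n hf d (Equiv.swap i j)
  have hdd : ⇑d ∘ ⇑(Equiv.swap i j) = ⇑d := by
    funext x
    rcases eq_or_ne x i with rfl | hxi
    · simp [Equiv.swap_apply_left, hij]
    rcases eq_or_ne x j with rfl | hxj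
    · simp [Equiv.swap_apply_right, hij]
    · rw [Function.comp_apply, Equiv.swap_apply_of_ne_of_ne hxi hxj]
  rw [hdd, Finsupp.equivFunOnFinite_symm_coe, Equiv.Perm.sign_swap hne] at h
  have h2 : coeff d f + coeff d f = 0 := by
    nth_rewrite 1 [h]
    simp
  have h3 : (2 : R) * coeff d f = 0 := by rw [two_mul]; exact h2
  rcases mul_eq_zero.mp h3 with h4 | h4
  · exact absurd h4 (two_ne_zero' )
  · exact h4


lemma sign_smul_ne (σ : Equiv.Perm (Fin n)) (a : R) (ha : a ≠ 0) :
    ((Equiv.Perm.sign σ : ℤ) • a) ≠ 0 := by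
  rcases Int.units_eq_one_or (Equiv.Perm.sign σ) with h | h <;> simp [h, ha]

lemma G_H_skew (f : P n) (hf : IsSkew n f) : Gmap n (Hmap n f) = f := by
  classical
  have hGH_mono : ∀ d : Fin n →₀ ℕ, Gmap n (Hmap n (monomial d 1)) =
      if StrictMono ⇑d then Fmap n (fun i => Polynomial.X ^ d i) else 0 := by
    intro d
    rw [Hmap_monomial]
    split_ifs with h
    · exact G_Amap n _
    · simp
  have step1 : Gmap n (Hmap n f) =
      ∑ d ∈ f.support, coeff d f •
        (if StrictMono ⇑d then Fmap n (fun i => Polynomial.X ^ d i) else 0) := by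
    conv_lhs => rw [MvPolynomial.as_sum f]
    rw [map_sum, map_sum]
    refine Finset.sum_congr rfl fun d _ => ?_
    have h1 : (monomial d) (coeff d f) = coeff d f • (monomial d) (1 : R) := by
      rw [MvPolynomial.smul_monomial, smul_eq_mul, mul_one]
    rw [h1, map_smul, map_smul, hGH_mono]
  have step2 : Gmap n (Hmap n f) =
      ∑ d ∈ f.support.filter (fun d : Fin n →₀ ℕ => StrictMono ⇑d),
        coeff d f • Fmap n (fun i => Polynomial.X ^ d i) := by
    rw [step1, Finset.sum_filter]
    refine Finset.sum_congr rfl fun d _ => ?_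
    rw [smul_ite, smul_zero]
  have step3 : ∀ d : Fin n →₀ ℕ, coeff d f • Fmap n (fun i => Polynomial.X ^ d i) =
      ∑ σ : Equiv.Perm (Fin n),
        monomial (Finsupp.equivFunOnFinite.symm (⇑d ∘ ⇑σ))
          (coeff (Finsupp.equivFunOnFinite.symm (⇑d ∘ ⇑σ)) f) := by
    intro d
    rw [Fmap_pow, Finset.smul_sum]
    refine Finset.sum_congr rfl fun σ _ => ?_
    rw [coeff_swap n hf d σ, MvPolynomial.smul_monomial, MvPolynomial.smul_monomial,
      smul_comm, smul_eq_mul, mul_one]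
  have step5 : Gmap n (Hmap n f) =
      ∑ p ∈ (f.support.filter (fun d : Fin n →₀ ℕ => StrictMono ⇑d)) ×ˢ
          (Finset.univ : Finset (Equiv.Perm (Fin n))),
        monomial (Finsupp.equivFunOnFinite.symm (⇑p.1 ∘ ⇑p.2))
          (coeff (Finsupp.equivFunOnFinite.symm (⇑p.1 ∘ ⇑p.2)) f) := by
    rw [step2, Finset.sum_product]
    exact Finset.sum_congr rfl fun d _ => step3 d
  rw [step5]
  conv_rhs => rw [MvPolynomial.as_sum f]
  refine Finset.sum_nbij'
    (fun p => Finsupp.equivFunOnFinite.symm (⇑p.1 ∘ ⇑p.2))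
    (fun e => (Finsupp.equivFunOnFinite.symm (⇑e ∘ ⇑(Tuple.sort ⇑e)), (Tuple.sort ⇑e)⁻¹))
    ?_ ?_ ?_ ?_ ?_
  · rintro ⟨d, σ⟩ hp
    rw [Finset.mem_product, Finset.mem_filter] at hp
    obtain ⟨⟨hd, hsm⟩, -⟩ := hp
    rw [mem_support_iff, coeff_swap n hf d σ]
    exact sign_smul_ne n σ _ (mem_support_iff.mp hd)
  · intro e he
    have hinj : Function.Injective ⇑e := by
      by_contra hinj
      exact (mem_support_iff.mp he) (coeff_noninj n hf e hinj)
    rw [Finset.mem_product, Finset.mem_filter]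
    refine ⟨⟨?_, ?_⟩, Finset.mem_univ _⟩
    · rw [mem_support_iff, coeff_swap n hf e (Tuple.sort ⇑e)]
      exact sign_smul_ne n _ _ (mem_support_iff.mp he)
    · show StrictMono ⇑(Finsupp.equivFunOnFinite.symm (⇑e ∘ ⇑(Tuple.sort ⇑e)))
      exact sort_strictMono n hinj
  · rintro ⟨d, σ⟩ hp
    rw [Finset.mem_product, Finset.mem_filter] at hp
    obtain ⟨⟨hd, hsm⟩, -⟩ := hp
    have hce : ⇑(Finsupp.equivFunOnFinite.symm (⇑d ∘ ⇑σ)) = ⇑d ∘ ⇑σ := rfl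
    have hinj_e : Function.Injective (⇑d ∘ ⇑σ) := hsm.injective.comp σ.injective
    have h1 : StrictMono ((⇑d ∘ ⇑σ) ∘ ⇑(Tuple.sort (⇑d ∘ ⇑σ))) := sort_strictMono n hinj_e
    have h2 : σ * Tuple.sort (⇑d ∘ ⇑σ) = 1 := by
      refine sort_unique n hsm.injective ?_ ?_
      · exact h1
      · simpa using hsm
    have h3 : Tuple.sort (⇑d ∘ ⇑σ) = σ⁻¹ := eq_inv_of_mul_eq_one_right h2
    have h4 : Tuple.sort ⇑(Finsupp.equivFunOnFinite.symm (⇑d ∘ ⇑σ)) = σ⁻¹ := h3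
    refine Prod.ext ?_ ?_
    · show Finsupp.equivFunOnFinite.symm
        (⇑(Finsupp.equivFunOnFinite.symm (⇑d ∘ ⇑σ)) ∘
          ⇑(Tuple.sort ⇑(Finsupp.equivFunOnFinite.symm (⇑d ∘ ⇑σ)))) = d
      rw [h4]
      have h5 : ⇑(Finsupp.equivFunOnFinite.symm (⇑d ∘ ⇑σ)) ∘ ⇑σ⁻¹ = ⇑d := by
        funext x; simp [hce]
      rw [h5, Finsupp.equivFunOnFinite_symm_coe]
    · show (Tuple.sort ⇑(Finsupp.equivFunOnFinite.symm (⇑d ∘ ⇑σ)))⁻¹ = σ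
      rw [h4, inv_inv]
  · intro e he
    have hre : ⇑(Finsupp.equivFunOnFinite.symm (⇑e ∘ ⇑(Tuple.sort ⇑e))) =
        ⇑e ∘ ⇑(Tuple.sort ⇑e) := rfl
    show Finsupp.equivFunOnFinite.symm
        (⇑(Finsupp.equivFunOnFinite.symm (⇑e ∘ ⇑(Tuple.sort ⇑e))) ∘
          ⇑((Tuple.sort ⇑e)⁻¹)) = e
    have h5 : ⇑(Finsupp.equivFunOnFinite.symm (⇑e ∘ ⇑(Tuple.sort ⇑e))) ∘
        ⇑((Tuple.sort ⇑e)⁻¹) = ⇑e := by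
      funext x; simp [hre]
    rw [h5, Finsupp.equivFunOnFinite_symm_coe]
  · rintro ⟨d, σ⟩ hp
    rfl

end Stmt11Aux

/-- the map `(R[x])ⁿ → P` sending `(f₁, …, fₙ)` to
`Σ_{σ ∈ Sₙ} sgn(σ) f_{σ(1)}(x₁) ⋯ f_{σ(n)}(xₙ)` is an alternating `R`-multilinear
map taking values in the skew-symmetric polynomials, and the induced `R`-linear
map `⋀ⁿ_R R[x] → Λₙ^sgn` is an isomorphism of `R`-modules (injective with range
exactly the skew-symmetric polynomials). -/
theorem stmt_11 (n : ℕ) (hn : 1 ≤ n) :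
    ∃ F : (Polynomial R) [⋀^Fin n]→ₗ[R] (P n),
      (∀ v : Fin n → Polynomial R,
        F v = ∑ σ : Equiv.Perm (Fin n), (Equiv.Perm.sign σ : ℤ) •
          ∏ i : Fin n, Polynomial.aeval (X i : P n) (v (σ i))) ∧
      (∀ v : Fin n → Polynomial R, IsSkew n (F v)) ∧
      ∃ G : ⋀[R]^n (Polynomial R) →ₗ[R] P n,
        (∀ v : Fin n → Polynomial R,
          G ⟨ExteriorAlgebra.ιMulti R n v,
             ExteriorAlgebra.ιMulti_range R n ⟨v, rfl⟩⟩ = F v) ∧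
        Function.Injective G ∧ LinearMap.range G = SkewSub n := by
  refine ⟨Stmt11Aux.Fmap n, Stmt11Aux.Fmap_apply n, Stmt11Aux.Fmap_skew n,
    Stmt11Aux.Gmap n, ?_, ?_, ?_⟩
  · intro v
    exact Stmt11Aux.G_Amap n v
  · intro x y h
    rw [← Stmt11Aux.GH_inv n x, ← Stmt11Aux.GH_inv n y, h]
  · ext f
    constructor
    · rintro ⟨x, rfl⟩
      exact Stmt11Aux.G_skew n x
    · intro hfs
      exact ⟨Stmt11Aux.Hmap n f, Stmt11Aux.G_H_skew n f hfs⟩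

end
end
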